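/- Let R be a left Noetherian ring. Then R satisfies property (◇) if and only if for every left R-module A, the submodule A_t (the sum of all semi-Artinian submodules of A) is the unique maximal essential extension of soc(A) inside A; that is, soc(A) is an essential submodule of A_t, and every submodule B of A containing soc(A) in which soc(A) is essential satisfies B ⊆ A_t. -/

import Mathlib

universe u v w

/-- The socle of a module: the sum (supremum) of all simple submodules. -/
def moduleSocle (R : Type u) [Ring R] (M : Type v) [AddCommGroup M] [Module R M] :
    Submodule R M :=
  sSup {S : Submodule R M | IsSimpleModule R S}

/-- A submodule `N` of `M` is essential if `N ⊓ L ≠ ⊥` for every nonzero submodule `L` of `M`. -/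
def IsEssentialSubmodule {R : Type u} [Ring R] {M : Type v} [AddCommGroup M] [Module R M]
    (N : Submodule R M) : Prop :=
  ∀ L : Submodule R M, L ≠ ⊥ → N ⊓ L ≠ ⊥

/-- A module is semi-Artinian if every nonzero quotient has a nonzero socle. -/
def IsSemiartinianModule (R : Type u) [Ring R] (M : Type v) [AddCommGroup M] [Module R M] :
    Prop :=
  ∀ N : Submodule R M, N ≠ ⊤ → moduleSocle R (M ⧸ N) ≠ ⊥

/-- A module is singular if the annihilator of each of its elements is an essential left
ideal of `R`. -/
def IsSingularModule (R : Type u) [Ring R] (M : Type v) [AddCommGroup M] [Module R M] : Prop :=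
  ∀ m : M, IsEssentialSubmodule (LinearMap.ker (LinearMap.toSpanSingleton R M m))

/-- Property (◇): every finitely generated left `R`-module containing an essential simple
submodule is Artinian. -/
def HasPropertyDiamond (R : Type u) [Ring R] : Prop :=
  ∀ (M : Type v) [AddCommGroup M] [Module R M], Module.Finite R M →
    (∃ S : Submodule R M, IsSimpleModule R S ∧ IsEssentialSubmodule S) → IsArtinian R M

/-- A left C-ring: every nonzero cyclic singular left module has a nonzero socle. -/
def IsLeftCRing (R : Type u) [Ring R] : Prop :=
  ∀ (M : Type v) [AddCommGroup M] [Module R M], Nontrivial M →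
    (∃ m : M, Submodule.span R {m} = ⊤) → IsSingularModule R M →
    moduleSocle R M ≠ ⊥

/-- The Dickson torsion part of a module: the sum of all its semi-Artinian submodules. -/
def dicksonTorsionPart (R : Type u) [Ring R] (A : Type v) [AddCommGroup A] [Module R A] :
    Submodule R A :=
  sSup {N : Submodule R A | IsSemiartinianModule R N}

section Aux

open Submodule

variable {R : Type u} [Ring R]

/-- Auxiliary: `M` has a simple submodule. -/
def HasSimpleSub (R : Type u) [Ring R] (M : Type*) [AddCommGroup M] [Module R M] : Prop :=
  ∃ S : Submodule R M, IsSimpleModule R S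

variable {M : Type*} [AddCommGroup M] [Module R M]
variable {W : Type*} [AddCommGroup W] [Module R W]

theorem socle_ne_bot_iff : moduleSocle R M ≠ ⊥ ↔ HasSimpleSub R M := by
  constructor
  · intro h
    by_contra hs
    apply h
    have he : {S : Submodule R M | IsSimpleModule R S} = ∅ := by
      ext S
      simp only [Set.mem_setOf_eq, Set.mem_empty_iff_false, iff_false]
      exact fun hS => hs ⟨S, hS⟩
    rw [moduleSocle, he, sSup_empty]
  · rintro ⟨S, hS⟩
    intro h
    exact (isSimpleModule_iff_isAtom.mp hS).1
      (le_bot_iff.mp (h ▸ le_sSup (show S ∈ {S : Submodule R M | IsSimpleModule R S} from hS)))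

theorem isSimpleModule_map_of_injective (f : M →ₗ[R] W) (hf : Function.Injective f)
    {S : Submodule R M} (hS : IsSimpleModule R S) : IsSimpleModule R (S.map f) := by
  haveI := hS
  exact IsSimpleModule.congr (Submodule.equivMapOfInjective f hf S).symm

theorem HasSimpleSub.of_injective (h : HasSimpleSub R M) (f : M →ₗ[R] W)
    (hf : Function.Injective f) : HasSimpleSub R W :=
  let ⟨S, hS⟩ := h
  ⟨S.map f, isSimpleModule_map_of_injective f hf hS⟩

theorem HasSimpleSub.of_equiv (h : HasSimpleSub R M) (e : M ≃ₗ[R] W) : HasSimpleSub R W :=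
  h.of_injective e.toLinearMap e.injective

theorem hasSimpleSub_of_range_ne_bot (f : M →ₗ[R] W) (hM : IsSemiartinianModule R M)
    (h : LinearMap.range f ≠ ⊥) : HasSimpleSub R W := by
  have hker : LinearMap.ker f ≠ ⊤ := fun hk =>
    h (LinearMap.range_eq_bot.mpr (LinearMap.ker_eq_top.mp hk))
  have h2 : HasSimpleSub R (M ⧸ LinearMap.ker f) := socle_ne_bot_iff.mp (hM _ hker)
  exact (h2.of_equiv f.quotKerEquivRange).of_injective (LinearMap.range f).subtype
    (Submodule.injective_subtype _)

theorem IsSemiartinianModule.of_surjective (hM : IsSemiartinianModule R M) (f : M →ₗ[R] W)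
    (hf : Function.Surjective f) : IsSemiartinianModule R W := by
  intro P hP
  haveI : Nontrivial (W ⧸ P) := Submodule.Quotient.nontrivial_iff.mpr hP
  refine socle_ne_bot_iff.mpr (hasSimpleSub_of_range_ne_bot (P.mkQ.comp f) hM ?_)
  rw [LinearMap.range_comp, LinearMap.range_eq_top.mpr hf, Submodule.map_top,
    Submodule.range_mkQ]
  exact top_ne_bot

theorem IsSemiartinianModule.of_equiv (hM : IsSemiartinianModule R M) (e : M ≃ₗ[R] W) :
    IsSemiartinianModule R W := hM.of_surjective e.toLinearMap e.surjective

theorem map_mkQ_self_eq_bot (N : Submodule R M) : Submodule.map N.mkQ N = ⊥ := by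
  rw [eq_bot_iff]
  rintro z ⟨y, hy, rfl⟩
  simpa using (Submodule.Quotient.mk_eq_zero N).mpr hy

/-- Semi-Artinian-ness passes to submodules (modules admitting an injective map into a
semi-Artinian module). -/
theorem IsSemiartinianModule.of_injective (hM : IsSemiartinianModule R M) (f : W →ₗ[R] M)
    (hf : Function.Injective f) : IsSemiartinianModule R W := by
  intro P hP
  refine socle_ne_bot_iff.mpr ?_
  set W' := LinearMap.range f with hW'
  set P' := P.map f with hP'def
  have hP'W' : P' ≤ W' := LinearMap.map_le_range
  set s : Set (Submodule R M) := {Q | P' ≤ Q ∧ Q ⊓ W' = P'} with hs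
  have hP's : P' ∈ s := ⟨le_rfl, le_antisymm inf_le_left (le_inf le_rfl hP'W')⟩
  have hchainub : ∀ c ⊆ s, IsChain (· ≤ ·) c → ∀ y ∈ c, ∃ ub ∈ s, ∀ z ∈ c, z ≤ ub := by
    intro c hcs hchain y hyc
    refine ⟨sSup c, ⟨(hcs hyc).1.trans (le_sSup hyc), le_antisymm ?_
      (le_inf ((hcs hyc).1.trans (le_sSup hyc)) hP'W')⟩, fun z hz => le_sSup hz⟩
    intro x hx
    obtain ⟨hx1, hx2⟩ := Submodule.mem_inf.mp hx
    obtain ⟨z, hzc, hxz⟩ := (Submodule.mem_sSup_of_directed ⟨y, hyc⟩ hchain.directedOn).mp hx1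
    rw [← (hcs hzc).2]
    exact Submodule.mem_inf.mpr ⟨hxz, hx2⟩
  obtain ⟨Q, hPQ, hQmax⟩ := zorn_le_nonempty₀ s hchainub P' hP's
  have hQmem := hQmax.prop
  have hW'Q : ¬ W' ≤ Q := by
    intro hle
    apply hP
    have h1 : P.map f = LinearMap.range f := by
      show P' = W'
      rw [← hQmem.2]
      exact inf_eq_right.mpr hle
    have h2 := congrArg (Submodule.comap f) h1
    rw [Submodule.comap_map_eq_of_injective hf] at h2
    rw [h2, eq_top_iff]
    exact fun w _ => Submodule.mem_comap.mpr (LinearMap.mem_range_self f w)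
  have hQtop : Q ≠ ⊤ := fun h => hW'Q (h ▸ le_top)
  obtain ⟨S, hS⟩ := socle_ne_bot_iff.mp (hM Q hQtop)
  haveI := hS
  set π := Q.mkQ with hπ
  have hatom := isSimpleModule_iff_isAtom.mp hS
  have hQle : Q ≤ Submodule.comap π S := by
    intro x hx
    refine Submodule.mem_comap.mpr ?_
    rw [show π x = 0 from (Submodule.Quotient.mk_eq_zero Q).mpr hx]
    exact S.zero_mem
  have hSW : S ≤ W'.map π := by
    have h1 : S ⊓ W'.map π ≠ ⊥ := by
      intro h0
      have hQ2 : Submodule.comap π S ∈ s := by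
        refine ⟨hQmem.1.trans hQle, le_antisymm ?_ (le_inf (hQmem.1.trans hQle) hP'W')⟩
        intro x hx
        obtain ⟨hx1, hx2⟩ := Submodule.mem_inf.mp hx
        have hπx : π x ∈ S ⊓ W'.map π := Submodule.mem_inf.mpr ⟨hx1, ⟨x, hx2, rfl⟩⟩
        rw [h0, Submodule.mem_bot] at hπx
        have hxQ : x ∈ Q := by
          rwa [← Submodule.ker_mkQ Q, LinearMap.mem_ker]
        rw [← hQmem.2]
        exact Submodule.mem_inf.mpr ⟨hxQ, hx2⟩
      have hle2 : Submodule.comap π S ≤ Q := hQmax.2 hQ2 hQle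
      apply hatom.1
      have h3 : S = Submodule.map π (Submodule.comap π S) :=
        (Submodule.map_comap_eq_of_surjective (Submodule.mkQ_surjective Q) S).symm
      rw [h3, le_bot_iff.mp (le_trans (Submodule.map_mono hle2)
        (le_of_eq (map_mkQ_self_eq_bot Q)))]
    rcases (inf_le_left : S ⊓ W'.map π ≤ S).lt_or_eq with hlt | heq
    · exact absurd (hatom.2 _ hlt) h1
    · rw [← heq]; exact inf_le_right
  set g : W →ₗ[R] M ⧸ Q := π.comp f with hg
  have hkerg : LinearMap.ker g = P := by
    rw [hg, LinearMap.ker_comp, Submodule.ker_mkQ]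
    apply le_antisymm
    · intro w hw
      have hmem : f w ∈ Q ⊓ W' := Submodule.mem_inf.mpr ⟨hw, ⟨w, rfl⟩⟩
      rw [hQmem.2] at hmem
      obtain ⟨p, hp, hpw⟩ := hmem
      rwa [← hf hpw]
    · exact Submodule.map_le_iff_le_comap.mp hQmem.1
  have hrg : LinearMap.range g = W'.map π := by rw [hg, LinearMap.range_comp]
  have hSrange : S ≤ LinearMap.range g := hrg ▸ hSW
  have hsimp2 : HasSimpleSub R (LinearMap.range g) :=
    ⟨Submodule.comap (LinearMap.range g).subtype S,
      IsSimpleModule.congr (Submodule.comapSubtypeEquivOfLe hSrange)⟩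
  have e : (W ⧸ P) ≃ₗ[R] LinearMap.range g := hkerg ▸ g.quotKerEquivRange
  exact hsimp2.of_equiv e.symm

theorem isSemiartinian_sSup {A : Type*} [AddCommGroup A] [Module R A]
    (s : Set (Submodule R A)) (h : ∀ N ∈ s, IsSemiartinianModule R N) :
    IsSemiartinianModule R ↥(sSup s) := by
  intro Q hQ
  have hex : ∃ N ∈ s, ¬ N ≤ Submodule.map (sSup s).subtype Q := by
    by_contra hall
    push_neg at hall
    apply hQ
    rw [eq_top_iff]
    rintro ⟨y, hy⟩ -
    have hy' : y ∈ Submodule.map (sSup s).subtype Q := (sSup_le hall) hy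
    obtain ⟨q, hq, hq2⟩ := hy'
    have hqy : q = ⟨y, hy⟩ := Subtype.ext hq2
    rwa [← hqy]
  obtain ⟨N, hNs, hNQ⟩ := hex
  refine socle_ne_bot_iff.mpr
    (hasSimpleSub_of_range_ne_bot (Q.mkQ.comp (Submodule.inclusion (le_sSup hNs))) (h N hNs) ?_)
  intro hbot
  apply hNQ
  intro x hx
  have hmem : Q.mkQ (Submodule.inclusion (le_sSup hNs) ⟨x, hx⟩) ∈
      (⊥ : Submodule R (↥(sSup s) ⧸ Q)) := by
    rw [← hbot]; exact ⟨⟨x, hx⟩, rfl⟩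
  rw [Submodule.mem_bot] at hmem
  have h2 : Submodule.inclusion (le_sSup hNs) ⟨x, hx⟩ ∈ Q := by
    rwa [← LinearMap.mem_ker, Submodule.ker_mkQ] at hmem
  exact ⟨_, h2, rfl⟩

theorem isSemiartinian_of_isSimpleModule (h : IsSimpleModule R M) : IsSemiartinianModule R M := by
  haveI := h
  intro N hN
  rcases IsSimpleOrder.eq_bot_or_eq_top N with rfl | rfl
  · refine socle_ne_bot_iff.mpr
      (HasSimpleSub.of_equiv ?_ (Submodule.quotEquivOfEqBot ⊥ rfl).symm)
    exact ⟨⊤, IsSimpleModule.congr Submodule.topEquiv⟩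
  · exact absurd rfl hN

theorem isSemiartinian_of_isArtinian [IsArtinian R M] : IsSemiartinianModule R M := by
  intro N hN
  haveI : Nontrivial (M ⧸ N) := Submodule.Quotient.nontrivial_iff.mpr hN
  haveI : Nontrivial (Submodule R (M ⧸ N)) := (Submodule.nontrivial_iff R).mpr inferInstance
  haveI : IsAtomic (Submodule R (M ⧸ N)) :=
    isAtomic_of_orderBot_wellFounded_lt IsWellFounded.wf
  rcases eq_bot_or_exists_atom_le (⊤ : Submodule R (M ⧸ N)) with htop | ⟨a, ha, -⟩
  · exact absurd htop top_ne_bot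
  · exact socle_ne_bot_iff.mpr ⟨a, isSimpleModule_iff_isAtom.mpr ha⟩

theorem isArtinian_of_isSimpleModule (h : IsSimpleModule R M) : IsArtinian R M := by
  haveI := h
  infer_instance

theorem map_finsetSup' {A B : Type*} [AddCommGroup A] [Module R A] [AddCommGroup B]
    [Module R B] (f : A →ₗ[R] B) {ι : Type*} (s : Finset ι) (g : ι → Submodule R A) :
    Submodule.map f (s.sup g) = s.sup fun i => Submodule.map f (g i) := by
  classical
  induction s using Finset.induction_on with
  | empty => simp
  | insert _ _ h ih => simp [Finset.sup_insert, Submodule.map_sup, ih]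

theorem isArtinian_finsetSup {A : Type*} [AddCommGroup A] [Module R A]
    (t : Finset (Submodule R A)) (h : ∀ S ∈ t, IsSimpleModule R S) :
    IsArtinian R ↥(t.sup id) := by
  classical
  induction t using Finset.induction_on with
  | empty =>
    rw [Finset.sup_empty]
    haveI : Subsingleton ↥(⊥ : Submodule R A) := inferInstance
    infer_instance
  | @insert S t hSt ih =>
    rw [Finset.sup_insert]
    haveI hX : IsArtinian R ↥(t.sup id) :=
      ih fun S' hS' => h S' (Finset.mem_insert_of_mem hS')
    haveI hSs : IsSimpleModule R ↥S := h S (Finset.mem_insert_self S t)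
    haveI hSart : IsArtinian R ↥S := isArtinian_of_isSimpleModule hSs
    show IsArtinian R ↥(S ⊔ t.sup id)
    apply (isArtinian_iff_submodule_quotient
      (Submodule.comap (S ⊔ t.sup id).subtype (t.sup id))).mpr
    constructor
    · exact isArtinian_of_linearEquiv
        (Submodule.comapSubtypeEquivOfLe (le_sup_right : t.sup id ≤ S ⊔ t.sup id)).symm
    · apply isArtinian_of_surjective ↥S
        ((Submodule.comap (S ⊔ t.sup id).subtype (t.sup id)).mkQ.comp
          (Submodule.inclusion (le_sup_left : S ≤ S ⊔ t.sup id)))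
      intro z
      obtain ⟨y, rfl⟩ := Submodule.mkQ_surjective _ z
      obtain ⟨sv, hsv, xv, hxv, hsum⟩ := Submodule.mem_sup.mp y.2
      refine ⟨⟨sv, hsv⟩, ?_⟩
      rw [LinearMap.comp_apply, Submodule.mkQ_apply, Submodule.mkQ_apply,
        Submodule.Quotient.eq]
      refine Submodule.mem_comap.mpr ?_
      show ((Submodule.inclusion (le_sup_left : S ≤ S ⊔ t.sup id) ⟨sv, hsv⟩ : ↥(S ⊔ t.sup id))
        : A) - (y : A) ∈ t.sup id
      show sv - (y : A) ∈ t.sup id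
      rw [← hsum]
      simpa using (t.sup id).neg_mem hxv

theorem subsingleton_of_bot_essential (hess : IsEssentialSubmodule (⊥ : Submodule R M)) :
    Subsingleton M := by
  have htop : (⊤ : Submodule R M) = ⊥ := by
    by_contra h
    exact hess ⊤ h (by simp)
  constructor
  intro a b
  have ha : a ∈ (⊥ : Submodule R M) := htop ▸ Submodule.mem_top
  have hb : b ∈ (⊥ : Submodule R M) := htop ▸ Submodule.mem_top
  rw [Submodule.mem_bot] at ha hb
  rw [ha, hb]

theorem isSemisimple_socle : IsSemisimpleModule R ↥(moduleSocle R M) := by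
  classical
  apply IsSemisimpleModule.of_sSup_simples_eq_top
  rw [eq_top_iff]
  rintro ⟨y, hy⟩ -
  obtain ⟨t, hts, hsp⟩ := (CompleteLattice.isCompactElement_iff_exists_le_sSup_of_le_sSup _ _).mp
    (Submodule.singleton_span_isCompactElement y)
    {S : Submodule R M | IsSimpleModule R S}
    (Submodule.span_le.mpr (Set.singleton_subset_iff.mpr hy))
  have hyt : y ∈ t.sup id := hsp (Submodule.mem_span_singleton_self y)
  set ι := (moduleSocle R M).subtype with hι
  have hmap : Submodule.map ι (t.sup fun S => Submodule.comap ι S) = t.sup id := by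
    rw [map_finsetSup']
    apply Finset.sup_congr rfl
    intro Si hSi
    rw [Submodule.map_comap_eq, Submodule.range_subtype]
    exact inf_eq_right.mpr (le_sSup (hts hSi))
  have hmem : ι ⟨y, hy⟩ ∈ Submodule.map ι (t.sup fun S => Submodule.comap ι S) := by
    rw [hmap]; exact hyt
  obtain ⟨w, hw, hww⟩ := hmem
  have hwy : w = ⟨y, hy⟩ := Subtype.ext hww
  rw [hwy] at hw
  refine SetLike.le_def.mp ?_ hw
  apply Finset.sup_le
  intro Si hSi
  apply le_sSup
  show IsSimpleModule R ↥(Submodule.comap ι Si)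
  haveI : IsSimpleModule R ↥Si := hts hSi
  exact IsSimpleModule.congr (Submodule.comapSubtypeEquivOfLe (le_sSup (hts hSi)))

theorem isSemisimple_of_le_socle (N : Submodule R M) (hN : N ≤ moduleSocle R M) :
    IsSemisimpleModule R ↥N := by
  haveI := isSemisimple_socle (R := R) (M := M)
  haveI : IsSemisimpleModule R
      ↥(Submodule.comap (moduleSocle R M).subtype N) := inferInstance
  exact IsSemisimpleModule.congr (Submodule.comapSubtypeEquivOfLe hN).symm

theorem exists_finset_simple_sup [IsNoetherian R M] (N : Submodule R M)
    (hss : IsSemisimpleModule R ↥N) :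
    ∃ t : Finset (Submodule R M), (∀ S ∈ t, IsSimpleModule R S) ∧ t.sup id = N := by
  classical
  haveI := hss
  have hfg : (⊤ : Submodule R ↥N).FG := IsNoetherian.noetherian ⊤
  have hcomp := (CompleteLattice.isCompactElement_iff_exists_le_sSup_of_le_sSup _ _).mp
    ((Submodule.fg_iff_compact _).mp hfg)
  have htop := IsSemisimpleModule.sSup_simples_eq_top R ↥N
  obtain ⟨u, hus, hsup⟩ := hcomp _ (le_of_eq htop.symm)
  have husup : u.sup id = ⊤ := le_antisymm le_top hsup
  refine ⟨u.image (Submodule.map N.subtype), ?_, ?_⟩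
  · intro S' hS'
    obtain ⟨Si, hSi, rfl⟩ := Finset.mem_image.mp hS'
    exact isSimpleModule_map_of_injective _ (Submodule.injective_subtype N) (hus hSi)
  · rw [Finset.sup_image]
    have h1 : Submodule.map N.subtype (u.sup id) =
        u.sup fun Si => Submodule.map N.subtype (id Si) := map_finsetSup' N.subtype u id
    simp only [Function.comp_def, id] at h1 ⊢
    rw [← h1, husup, Submodule.map_top, Submodule.range_subtype]

theorem socle_le_dickson : moduleSocle R M ≤ dicksonTorsionPart R M :=
  sSup_le_sSup fun _ hS => isSemiartinian_of_isSimpleModule hS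

theorem dickson_isSemiartinian : IsSemiartinianModule R ↥(dicksonTorsionPart R M) :=
  isSemiartinian_sSup _ fun _ hN => hN

theorem socle_essential_in_dickson (L : Submodule R M) (hL : L ≤ dicksonTorsionPart R M)
    (hbot : L ≠ ⊥) : moduleSocle R M ⊓ L ≠ ⊥ := by
  have hsa : IsSemiartinianModule R ↥L :=
    dickson_isSemiartinian.of_injective (Submodule.inclusion hL)
      (Submodule.inclusion_injective hL)
  haveI : Nontrivial ↥L := Submodule.nontrivial_iff_ne_bot.mpr hbot
  obtain ⟨S, hS⟩ : HasSimpleSub R ↥L := hasSimpleSub_of_range_ne_bot LinearMap.id hsa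
    (by rw [LinearMap.range_id]; exact top_ne_bot)
  have h1 : Submodule.map L.subtype S ≠ ⊥ := by
    intro h0
    apply (isSimpleModule_iff_isAtom.mp hS).1
    have := congrArg (Submodule.comap L.subtype) h0
    rwa [Submodule.comap_map_eq_of_injective (Submodule.injective_subtype L),
      Submodule.comap_bot, Submodule.ker_subtype] at this
  have hle : Submodule.map L.subtype S ≤ moduleSocle R M ⊓ L :=
    le_inf (le_sSup (show IsSimpleModule R ↥(Submodule.map L.subtype S) from
      isSimpleModule_map_of_injective _ (Submodule.injective_subtype L) hS))
      (Submodule.map_subtype_le L S)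
  exact fun h0 => h1 (le_bot_iff.mp (h0 ▸ hle))

theorem isArtinian_of_noetherian_of_semiartinian [IsNoetherian R M]
    (h : IsSemiartinianModule R M) : IsArtinian R M := by
  by_contra hM
  have hbotmem : (⊥ : Submodule R M) ∈ {N : Submodule R M | ¬ IsArtinian R (M ⧸ N)} := by
    intro hA
    exact hM (isArtinian_of_linearEquiv (Submodule.quotEquivOfEqBot (⊥ : Submodule R M) rfl))
  obtain ⟨N, hNmem, hNmax⟩ := (set_has_maximal_iff_noetherian.mpr inferInstance)
    {N : Submodule R M | ¬ IsArtinian R (M ⧸ N)} ⟨⊥, hbotmem⟩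
  have hNtop : N ≠ ⊤ := by
    intro ht
    apply hNmem
    subst ht
    haveI : Subsingleton (M ⧸ (⊤ : Submodule R M)) :=
      Submodule.Quotient.subsingleton_iff.mpr rfl
    infer_instance
  set Soc := moduleSocle R (M ⧸ N) with hSoc
  have hSocne : Soc ≠ ⊥ := h N hNtop
  set N' := Submodule.comap N.mkQ Soc with hN'
  have hNN' : N ≤ N' := by
    intro y hy
    refine Submodule.mem_comap.mpr ?_
    rw [show N.mkQ y = 0 from (Submodule.Quotient.mk_eq_zero N).mpr hy]
    exact Soc.zero_mem
  have hmapN' : Submodule.map N.mkQ N' = Soc :=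
    Submodule.map_comap_eq_of_surjective (Submodule.mkQ_surjective N) Soc
  have hNlt : N < N' := lt_of_le_of_ne hNN' (by
    intro heq
    apply hSocne
    rw [← hmapN', ← heq, map_mkQ_self_eq_bot])
  have hN'art : IsArtinian R (M ⧸ N') := by
    by_contra hA
    exact hNmax N' hA hNlt
  have hssSoc : IsSemisimpleModule R ↥Soc := isSemisimple_of_le_socle Soc le_rfl
  obtain ⟨t, htsimp, htsup⟩ := exists_finset_simple_sup Soc hssSoc
  have hSocart : IsArtinian R ↥Soc := htsup ▸ isArtinian_finsetSup t htsimp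
  have e : ((M ⧸ N) ⧸ Soc) ≃ₗ[R] M ⧸ N' :=
    hmapN' ▸ Submodule.quotientQuotientEquivQuotient N N' hNN'
  haveI := hN'art
  have hQart : IsArtinian R ((M ⧸ N) ⧸ Soc) := isArtinian_of_linearEquiv e.symm
  exact hNmem ((isArtinian_iff_submodule_quotient Soc).mpr ⟨hSocart, hQart⟩)

end Aux

section Main

open Submodule

variable {R : Type u} [Ring R]

theorem isArtinian_of_fg_essential_socle [IsNoetherianRing R]
    (hd : HasPropertyDiamond.{u, v} R) (n : ℕ) :
    ∀ (M : Type v) [AddCommGroup M] [Module R M], Module.Finite R M →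
      ∀ t : Finset (Submodule R M), t.card ≤ n → (∀ S ∈ t, IsSimpleModule R S) →
      IsEssentialSubmodule (t.sup id) → IsArtinian R M := by
  induction n with
  | zero =>
    intro M _ _ _ t hcard _ hess
    have ht : t = ∅ := Finset.card_eq_zero.mp (le_antisymm hcard (Nat.zero_le _))
    subst ht
    rw [Finset.sup_empty] at hess
    haveI := subsingleton_of_bot_essential hess
    infer_instance
  | succ n ih =>
    intro M _ _ hfin t hcard hsimp hess
    classical
    rcases t.eq_empty_or_nonempty with rfl | ⟨S, hSt⟩
    · haveI := subsingleton_of_bot_essential (by rwa [Finset.sup_empty] at hess)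
      infer_instance
    · haveI := hfin
      haveI : IsNoetherian R M := isNoetherian_of_isNoetherianRing_of_finite R M
      haveI hS : IsSimpleModule R ↥S := hsimp S hSt
      have hatom := isSimpleModule_iff_isAtom.mp hS
      set E : Submodule R M := (t.erase S).sup id with hE
      have hsup : t.sup id = S ⊔ E := by
        conv_lhs => rw [← Finset.insert_erase hSt]
        rw [Finset.sup_insert]
        rfl
      have hcard' : (t.erase S).card ≤ n := by
        have := Finset.card_erase_of_mem hSt
        omega
      have hsimp' : ∀ S' ∈ t.erase S, IsSimpleModule R ↥S' :=
        fun S' hS' => hsimp S' (Finset.mem_of_mem_erase hS')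
      by_cases hSE : S ≤ E
      · have heq : t.sup id = E := by rw [hsup, sup_eq_right.mpr hSE]
        refine ih M hfin (t.erase S) hcard' hsimp' ?_
        show IsEssentialSubmodule E
        exact heq ▸ hess
      · have hSEbot : S ⊓ E = ⊥ := by
          rcases (inf_le_left : S ⊓ E ≤ S).lt_or_eq with hlt | heqq
          · exact hatom.2 _ hlt
          · exact absurd (heqq ▸ inf_le_right) hSE
        set s : Set (Submodule R M) := {C | E ≤ C ∧ C ⊓ S = ⊥} with hsdef
        have hEs : E ∈ s := ⟨le_rfl, by rw [inf_comm]; exact hSEbot⟩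
        have hchainub : ∀ c ⊆ s, IsChain (· ≤ ·) c → ∀ y ∈ c, ∃ ub ∈ s, ∀ z ∈ c, z ≤ ub := by
          intro c hcs hchain y hyc
          refine ⟨sSup c, ⟨(hcs hyc).1.trans (le_sSup hyc), ?_⟩, fun z hz => le_sSup hz⟩
          rw [eq_bot_iff]
          intro x hx
          obtain ⟨hx1, hx2⟩ := Submodule.mem_inf.mp hx
          obtain ⟨z, hzc, hxz⟩ :=
            (Submodule.mem_sSup_of_directed ⟨y, hyc⟩ hchain.directedOn).mp hx1
          rw [← (hcs hzc).2]
          exact Submodule.mem_inf.mpr ⟨hxz, hx2⟩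
        obtain ⟨C, hEC, hCmax⟩ := zorn_le_nonempty₀ s hchainub E hEs
        have hCmem := hCmax.prop
        set π := C.mkQ with hπ
        -- the image of S in M ⧸ C
        set finc : ↥S →ₗ[R] M ⧸ C := π.comp S.subtype with hfinc
        have hkerf : LinearMap.ker finc = ⊥ := by
          rw [hfinc, LinearMap.ker_comp, Submodule.ker_mkQ, eq_bot_iff]
          rintro ⟨x, hxS⟩ hx
          have hmem : x ∈ C ⊓ S := Submodule.mem_inf.mpr ⟨hx, hxS⟩
          rw [hCmem.2, Submodule.mem_bot] at hmem
          show (⟨x, hxS⟩ : ↥S) ∈ (⊥ : Submodule R ↥S)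
          rw [Submodule.mem_bot]
          exact Subtype.ext hmem
        have hinj := LinearMap.ker_eq_bot.mp hkerf
        have hrange : LinearMap.range finc = S.map π := by
          rw [hfinc, LinearMap.range_comp, Submodule.range_subtype]
        have hmapS_simple : IsSimpleModule R ↥(S.map π) := by
          rw [← hrange]
          exact IsSimpleModule.congr (LinearEquiv.ofInjective finc hinj).symm
        have hmapSne : S.map π ≠ ⊥ := by
          intro h0
          have hle : S ≤ C := by
            rw [← Submodule.ker_mkQ C]
            exact Submodule.map_le_iff_le_comap.mp (le_of_eq_of_le h0 bot_le)
          apply hatom.1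
          rw [← hCmem.2]
          exact (inf_eq_right.mpr hle).symm
        have hq_art : IsArtinian R (M ⧸ C) := by
          apply hd (M ⧸ C) inferInstance
          refine ⟨S.map π, hmapS_simple, ?_⟩
          intro L hL
          set Q := Submodule.comap π L with hQdef
          have hCQ : C ≤ Q := by
            intro x hx
            refine Submodule.mem_comap.mpr ?_
            rw [show π x = 0 from (Submodule.Quotient.mk_eq_zero C).mpr hx]
            exact L.zero_mem
          have hmapQ : Submodule.map π Q = L :=
            Submodule.map_comap_eq_of_surjective (Submodule.mkQ_surjective C) L
          have hQC : Q ≠ C := by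
            intro heq
            apply hL
            rw [← hmapQ, heq, map_mkQ_self_eq_bot]
          have hQs : Q ∉ s := fun hmem => hQC (le_antisymm (hCmax.2 hmem hCQ) hCQ)
          have h1 : Q ⊓ S ≠ ⊥ := fun h0 => hQs ⟨hCmem.1.trans hCQ, h0⟩
          have hSQ : S ≤ Q := by
            rcases (inf_le_right : Q ⊓ S ≤ S).lt_or_eq with hlt | heqq
            · exact absurd (hatom.2 _ hlt) h1
            · exact heqq ▸ inf_le_left
          have hle2 : S.map π ≤ L := by
            rw [← hmapQ]
            exact Submodule.map_mono hSQ
          intro h0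
          exact hmapSne ((inf_eq_left.mpr hle2).symm.trans h0)
        have hCart : IsArtinian R ↥C := by
          have hfinC : Module.Finite R ↥C := Module.Finite.iff_fg.mpr (IsNoetherian.noetherian C)
          set u : Finset (Submodule R ↥C) := (t.erase S).image (Submodule.comap C.subtype)
            with hu
          have hEleC : ∀ Si ∈ t.erase S, Si ≤ C := fun Si hSi =>
            le_trans (Finset.le_sup (f := id) hSi) hCmem.1
          have hmapsup : Submodule.map C.subtype (u.sup id) = E := by
            rw [hu, Finset.sup_image]
            have h2 : Submodule.map C.subtype ((t.erase S).sup fun Si =>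
                Submodule.comap C.subtype Si) = (t.erase S).sup fun Si =>
                Submodule.map C.subtype (Submodule.comap C.subtype Si) :=
              map_finsetSup' C.subtype (t.erase S) fun Si => Submodule.comap C.subtype Si
            simp only [Function.comp_def, id] at h2 ⊢
            rw [h2, hE]
            apply Finset.sup_congr rfl
            intro Si hSi
            rw [Submodule.map_comap_eq, Submodule.range_subtype]
            exact inf_eq_right.mpr (hEleC Si hSi)
          apply ih ↥C hfinC u (le_trans (Finset.card_image_le) hcard') ?_ ?_
          · intro S' hS'
            obtain ⟨Si, hSi, rfl⟩ := Finset.mem_image.mp hS'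
            haveI : IsSimpleModule R ↥Si := hsimp' Si hSi
            exact IsSimpleModule.congr (Submodule.comapSubtypeEquivOfLe (hEleC Si hSi))
          · intro L' hL'
            have hLne : Submodule.map C.subtype L' ≠ ⊥ := by
              intro h0
              apply hL'
              have := congrArg (Submodule.comap C.subtype) h0
              rwa [Submodule.comap_map_eq_of_injective (Submodule.injective_subtype C),
                Submodule.comap_bot, Submodule.ker_subtype] at this
            have h1 := hess (Submodule.map C.subtype L') hLne
            obtain ⟨z, hz, hzne⟩ := (Submodule.ne_bot_iff _).mp h1
            obtain ⟨hz1, hz2⟩ := Submodule.mem_inf.mp hz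
            rw [hsup] at hz1
            obtain ⟨sv, hsv, ev, hev, hsum⟩ := Submodule.mem_sup.mp hz1
            obtain ⟨w, hwL', hwz⟩ := hz2
            have hzC : z ∈ C := hwz ▸ w.2
            have hsvC : sv ∈ C ⊓ S := by
              refine Submodule.mem_inf.mpr ⟨?_, hsv⟩
              have : sv = z - ev := by rw [← hsum]; abel
              rw [this]
              exact Submodule.sub_mem C hzC (hCmem.1 hev)
            rw [hCmem.2, Submodule.mem_bot] at hsvC
            have hzE : z ∈ E := by
              rw [← hsum, hsvC, zero_add]; exact hev
            have hwmem : w ∈ u.sup id := by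
              have hmem2 : C.subtype w ∈ Submodule.map C.subtype (u.sup id) := by
                rw [hmapsup, hwz]; exact hzE
              obtain ⟨w', hw', hww⟩ := hmem2
              rwa [← Submodule.injective_subtype C hww]
            refine (Submodule.ne_bot_iff _).mpr ⟨w, Submodule.mem_inf.mpr ⟨hwmem, hwL'⟩, ?_⟩
            intro h0
            apply hzne
            rw [← hwz, h0]
            simp
        exact (isArtinian_iff_submodule_quotient C).mpr ⟨hCart, hq_art⟩

end Main

/-- For a left Noetherian ring, property (◇) holds iff for every module `A`, the Dickson
torsion part of `A` is the unique maximal essential extension of `soc(A)` inside `A`. -/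
theorem stmt7 (R : Type u) [Ring R] [IsNoetherianRing R] :
    HasPropertyDiamond.{u, v} R ↔
      ∀ (A : Type v) [AddCommGroup A] [Module R A],
        (moduleSocle R A ≤ dicksonTorsionPart R A ∧
          ∀ L : Submodule R A, L ≤ dicksonTorsionPart R A → L ≠ ⊥ →
            moduleSocle R A ⊓ L ≠ ⊥) ∧
        ∀ B : Submodule R A, moduleSocle R A ≤ B →
          (∀ L : Submodule R A, L ≤ B → L ≠ ⊥ → moduleSocle R A ⊓ L ≠ ⊥) →
          B ≤ dicksonTorsionPart R A := by
  constructor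
  · intro hd A _ _
    refine ⟨⟨socle_le_dickson, fun L hL hLb => socle_essential_in_dickson L hL hLb⟩, ?_⟩
    intro B _ hBess
    intro x hx
    have hspan_le : Submodule.span R {x} ≤ B :=
      Submodule.span_le.mpr (Set.singleton_subset_iff.mpr hx)
    haveI hfin : Module.Finite R ↥(Submodule.span R {x}) :=
      Module.Finite.iff_fg.mpr (Submodule.fg_span_singleton x)
    haveI : IsNoetherian R ↥(Submodule.span R {x}) :=
      isNoetherian_of_isNoetherianRing_of_finite R _
    set D := Submodule.comap (Submodule.span R {x}).subtype (moduleSocle R A) with hD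
    have hmapD : Submodule.map (Submodule.span R {x}).subtype D ≤ moduleSocle R A := by
      rw [hD, Submodule.map_comap_eq]
      exact inf_le_right
    have hssD : IsSemisimpleModule R ↥D := by
      haveI := isSemisimple_of_le_socle _ hmapD
      exact IsSemisimpleModule.congr
        (Submodule.equivMapOfInjective (Submodule.span R {x}).subtype
          (Submodule.injective_subtype _) D)
    obtain ⟨t, htsimp, htsup⟩ := exists_finset_simple_sup D hssD
    have hess : IsEssentialSubmodule (t.sup id) := by
      rw [htsup]
      intro L' hL'
      have hLne : Submodule.map (Submodule.span R {x}).subtype L' ≠ ⊥ := by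
        intro h0
        apply hL'
        have := congrArg (Submodule.comap (Submodule.span R {x}).subtype) h0
        rwa [Submodule.comap_map_eq_of_injective (Submodule.injective_subtype _),
          Submodule.comap_bot, Submodule.ker_subtype] at this
      have h1 := hBess _ ((Submodule.map_subtype_le _ _).trans hspan_le) hLne
      obtain ⟨z, hz, hzne⟩ := (Submodule.ne_bot_iff _).mp h1
      obtain ⟨hz1, hz2⟩ := Submodule.mem_inf.mp hz
      obtain ⟨w, hw, hwz⟩ := hz2
      refine (Submodule.ne_bot_iff _).mpr ⟨w, Submodule.mem_inf.mpr ⟨?_, hw⟩, ?_⟩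
      · rw [hD]
        exact Submodule.mem_comap.mpr (hwz.symm ▸ hz1)
      · intro h0
        apply hzne
        rw [← hwz, h0]
        simp
    have hart : IsArtinian R ↥(Submodule.span R {x}) :=
      isArtinian_of_fg_essential_socle hd t.card (↥(Submodule.span R {x})) hfin t le_rfl
        htsimp hess
    haveI := hart
    have hsa : IsSemiartinianModule R ↥(Submodule.span R {x}) := isSemiartinian_of_isArtinian
    have hmem : Submodule.span R {x} ∈ {N : Submodule R A | IsSemiartinianModule R ↥N} := hsa
    exact le_sSup hmem (Submodule.mem_span_singleton_self x)
  · intro hyp M _ _ hfin hex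
    obtain ⟨S, hS, hess⟩ := hex
    haveI := hfin
    haveI : IsNoetherian R M := isNoetherian_of_isNoetherianRing_of_finite R M
    obtain ⟨-, h2⟩ := hyp M
    have htop : (⊤ : Submodule R M) ≤ dicksonTorsionPart R M := by
      apply h2 ⊤ le_top
      intro L _ hL h0
      apply hess L hL
      rw [eq_bot_iff]
      calc S ⊓ L ≤ moduleSocle R M ⊓ L :=
            inf_le_inf_right L (le_sSup (show IsSimpleModule R ↥S from hS))
        _ = ⊥ := h0
    have heq : dicksonTorsionPart R M = ⊤ := top_le_iff.mp htop
    have hsa : IsSemiartinianModule R M := by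
      have h3 : IsSemiartinianModule R ↥(dicksonTorsionPart R M) := dickson_isSemiartinian
      rw [heq] at h3
      exact h3.of_equiv Submodule.topEquiv
    exact isArtinian_of_noetherian_of_semiartinian hsa
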